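/- Infinitely many of the Dedekind–Stieltjes constants γ_n(K) are positive and infinitely many are negative, for any number field K. -/

import Mathlib

open Filter NumberField

open Topology

private lemma aux_le_zero {c B : ℝ} (h : ∀ t : ℝ, 1 ≤ t → c * t ≤ B) : c ≤ 0 := by
  by_contra hc
  push_neg at hc
  have h1 := h (max 1 ((B + 1) / c)) (le_max_left _ _)
  have h2 : B + 1 ≤ c * max 1 ((B + 1) / c) :=
    calc B + 1 = c * ((B + 1) / c) := by field_simp
    _ ≤ c * max 1 ((B + 1) / c) := mul_le_mul_of_nonneg_left (le_max_right _ _) hc.le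
  linarith

private lemma aux_key {γ : ℕ → ℝ} {C : ℝ} {n : ℕ}
    (hn : 1 ≤ n) (hC : 0 ≤ C)
    (hb : ∀ t : ℝ, 1 ≤ t → γ n * t ^ n ≤ C + ∑ k ∈ Finset.range n, |γ k| * t ^ k) :
    γ n ≤ 0 := by
  set D := ∑ k ∈ Finset.range n, |γ k| with hD
  have hD0 : 0 ≤ D := Finset.sum_nonneg fun k _ => abs_nonneg _
  apply aux_le_zero (B := C + D)
  intro t ht
  have ht0 : (0:ℝ) < t := by linarith
  have hpow : (0:ℝ) < t ^ (n - 1) := pow_pos ht0 _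
  have h1 : ∑ k ∈ Finset.range n, |γ k| * t ^ k ≤ D * t ^ (n - 1) := by
    rw [hD, Finset.sum_mul]
    refine Finset.sum_le_sum fun k hk => ?_
    have hk' : k ≤ n - 1 := by have := Finset.mem_range.mp hk; omega
    exact mul_le_mul_of_nonneg_left (pow_le_pow_right₀ ht hk') (abs_nonneg _)
  have h3 : t ^ n = t * t ^ (n - 1) := by
    conv_lhs => rw [show n = 1 + (n - 1) by omega]
    rw [pow_add, pow_one]
  have hC' : C ≤ C * t ^ (n - 1) := le_mul_of_one_le_right hC (one_le_pow₀ ht)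
  have h4 : γ n * t * t ^ (n - 1) ≤ (C + D) * t ^ (n - 1) := by
    calc γ n * t * t ^ (n - 1) = γ n * t ^ n := by rw [h3]; ring
    _ ≤ C + ∑ k ∈ Finset.range n, |γ k| * t ^ k := hb t ht
    _ ≤ C * t ^ (n - 1) + D * t ^ (n - 1) := by linarith
    _ = (C + D) * t ^ (n - 1) := by ring
  exact le_of_mul_le_mul_right h4 hpow

private lemma lemA {γ : ℕ → ℝ} {g : ℝ → ℝ} {C : ℝ} {N : ℕ}
    (hsum : ∀ x : ℝ, 2 ≤ x → HasSum (fun n => γ n * (x - 1) ^ n) (g x))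
    (hC0 : 0 ≤ C)
    (hC : ∀ x : ℝ, 2 ≤ x → |g x| ≤ C)
    (hsign : ∀ n, N ≤ n → 0 ≤ γ n) :
    ∀ n, N < n → γ n = 0 := by
  intro n hn
  have hn1 : 1 ≤ n := by omega
  refine le_antisymm (aux_key hn1 hC0 ?_) (hsign n (by omega))
  intro t ht
  have ht0 : (0:ℝ) ≤ t := by linarith
  have hx : (2:ℝ) ≤ t + 1 := by linarith
  have h := hsum (t + 1) hx
  rw [show t + 1 - 1 = t by ring] at h
  have htail : HasSum (fun k => γ (k + n) * t ^ (k + n))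
      (g (t + 1) - ∑ i ∈ Finset.range n, γ i * t ^ i) :=
    (hasSum_nat_add_iff' n).mpr h
  have h0 : γ (0 + n) * t ^ (0 + n) ≤ g (t + 1) - ∑ i ∈ Finset.range n, γ i * t ^ i :=
    le_hasSum htail 0 fun j _ => mul_nonneg (hsign _ (by omega)) (pow_nonneg ht0 _)
  simp only [zero_add] at h0
  have hg := (abs_le.mp (hC (t + 1) hx)).2
  have hsum' : -(∑ i ∈ Finset.range n, γ i * t ^ i) ≤ ∑ i ∈ Finset.range n, |γ i| * t ^ i := by
    refine (neg_le_abs _).trans ?_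
    refine (Finset.abs_sum_le_sum_abs _ _).trans ?_
    refine Finset.sum_le_sum fun i _ => ?_
    rw [abs_mul, abs_pow, abs_of_nonneg ht0]
  linarith

private lemma lemB {γ : ℕ → ℝ} {g : ℝ → ℝ} {C : ℝ} {j : ℕ}
    (hsum : ∀ x : ℝ, 2 ≤ x → HasSum (fun n => γ n * (x - 1) ^ n) (g x))
    (hC0 : 0 ≤ C)
    (hC : ∀ x : ℝ, 2 ≤ x → |g x| ≤ C)
    (hj : 1 ≤ j) (htail : ∀ k, j < k → γ k = 0) : γ j = 0 := by
  have habs : |γ j| ≤ 0 := by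
    refine aux_key (γ := fun k => |γ k|) hj hC0 ?_
    intro t ht
    have ht0 : (0:ℝ) ≤ t := by linarith
    have hx : (2:ℝ) ≤ t + 1 := by linarith
    have h := hsum (t + 1) hx
    rw [show t + 1 - 1 = t by ring] at h
    have hfin : HasSum (fun k => γ k * t ^ k) (∑ k ∈ Finset.range (j + 1), γ k * t ^ k) :=
      hasSum_sum_of_ne_finset_zero fun k hk => by
        rw [htail k (by simpa using hk), zero_mul]
    have heq : g (t + 1) = ∑ k ∈ Finset.range (j + 1), γ k * t ^ k := h.unique hfin
    rw [Finset.sum_range_succ] at heq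
    have hj' : γ j * t ^ j = g (t + 1) - ∑ k ∈ Finset.range j, γ k * t ^ k := by linarith
    have : |γ j| * t ^ j = |γ j * t ^ j| := by
      rw [abs_mul, abs_pow, abs_of_nonneg ht0]
    rw [this, hj']
    calc |g (t + 1) - ∑ k ∈ Finset.range j, γ k * t ^ k|
        ≤ |g (t + 1)| + |∑ k ∈ Finset.range j, γ k * t ^ k| := abs_sub _ _
    _ ≤ C + ∑ k ∈ Finset.range j, |γ k| * t ^ k := by
        refine add_le_add (hC _ hx) ?_
        refine (Finset.abs_sum_le_sum_abs _ _).trans ?_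
        refine Finset.sum_le_sum fun i _ => ?_
        rw [abs_mul, abs_pow, abs_of_nonneg ht0]
    _ = C + ∑ k ∈ Finset.range j, |(fun k => |γ k|) k| * t ^ k := by
        simp [abs_abs]
  exact abs_eq_zero.mp (le_antisymm habs (abs_nonneg _))

private lemma lemC {γ : ℕ → ℝ} {g : ℝ → ℝ} {C : ℝ} {N : ℕ}
    (hsum : ∀ x : ℝ, 2 ≤ x → HasSum (fun n => γ n * (x - 1) ^ n) (g x))
    (hC0 : 0 ≤ C)
    (hC : ∀ x : ℝ, 2 ≤ x → |g x| ≤ C)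
    (htop : ∀ n, N < n → γ n = 0) :
    ∀ k, 1 ≤ k → γ k = 0 := by
  have H : ∀ d k, 1 ≤ k → N + 1 ≤ k + d → γ k = 0 := by
    intro d
    induction d with
    | zero => intro k hk1 hk2; exact htop k (by omega)
    | succ d ih =>
      intro k hk1 hk2
      by_cases h : N + 1 ≤ k + d
      · exact ih k hk1 h
      · refine lemB hsum hC0 hC hk1 fun m hm => ?_
        by_cases hm' : N < m
        · exact htop m hm'
        · exact ih m (by omega) (by omega)
  exact fun k hk => H (N + 1) k hk (by omega)

/-- Infinitely many of the constants `γ_n(K)` are positive and infinitely many negative. -/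
theorem dedekind_stieltjes_sign_changes (K : Type*) [Field K] [NumberField K]
    (ρ : ℝ) (Z : ℂ → ℂ) (γ : ℕ → ℝ)
    (hZ : ∀ s : ℂ, 1 < s.re →
      HasSum (fun I : {I : Ideal (𝓞 K) // I ≠ ⊥} =>
        (Ideal.absNorm I.1 : ℂ) ^ (-s)) (Z s))
    (hγ : ∀ s : ℂ, s ≠ 1 →
      HasSum (fun n : ℕ => (γ n : ℂ) * (s - 1) ^ n) (Z s - (ρ : ℂ) / (s - 1))) :
    {n : ℕ | 0 < γ n}.Infinite ∧ {n : ℕ | γ n < 0}.Infinite := by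
  classical
  set ι := {I : Ideal (𝓞 K) // I ≠ ⊥} with hιdef
  -- real form of the Dirichlet series
  have h1 : ∀ x : ℝ, 1 < x →
      HasSum (fun I : ι => (Ideal.absNorm I.1 : ℝ) ^ (-x)) ((Z x).re) := by
    intro x hx
    have hre : (1:ℝ) < (x : ℂ).re := by simpa using hx
    have h := (hZ x hre).mapL Complex.reCLM
    have e : (fun I : ι => Complex.reCLM ((Ideal.absNorm I.1 : ℂ) ^ (-(x:ℂ)))) =
        fun I : ι => (Ideal.absNorm I.1 : ℝ) ^ (-x) := by
      funext I
      have hN : (0:ℝ) ≤ (Ideal.absNorm I.1 : ℝ) := Nat.cast_nonneg _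
      simp only [Complex.reCLM_apply]
      rw [show -(x:ℂ) = ((-x : ℝ) : ℂ) by push_cast; ring,
        show ((Ideal.absNorm I.1 : ℕ) : ℂ) = (((Ideal.absNorm I.1 : ℕ) : ℝ) : ℂ) by push_cast; ring,
        ← Complex.ofReal_cpow hN, Complex.ofReal_re]
    rwa [e] at h
  -- real form of the power series
  have h2 : ∀ x : ℝ, 2 ≤ x →
      HasSum (fun n => γ n * (x - 1) ^ n) ((Z x).re - ρ / (x - 1)) := by
    intro x hx
    have hx1 : (x : ℂ) ≠ 1 := by
      simp only [ne_eq, Complex.ofReal_eq_one]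
      intro h; rw [h] at hx; linarith
    have h := (hγ x hx1).mapL Complex.reCLM
    have e1 : (fun n : ℕ => Complex.reCLM ((γ n : ℂ) * ((x:ℂ) - 1) ^ n)) =
        fun n => γ n * (x - 1) ^ n := by
      funext n
      simp only [Complex.reCLM_apply]
      rw [show ((x:ℂ) - 1) = ((x - 1 : ℝ) : ℂ) by push_cast; ring,
        ← Complex.ofReal_pow, ← Complex.ofReal_mul, Complex.ofReal_re]
    have e2 : Complex.reCLM (Z x - (ρ:ℂ) / ((x:ℂ) - 1)) = (Z x).re - ρ / (x - 1) := by
      simp only [Complex.reCLM_apply, Complex.sub_re]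
      congr 1
      rw [show ((x:ℂ) - 1) = ((x - 1 : ℝ) : ℂ) by push_cast; ring,
        ← Complex.ofReal_div, Complex.ofReal_re]
    rw [e1, e2] at h
    exact h
  -- ideal-theoretic facts
  have htopbot : (⊤ : Ideal (𝓞 K)) ≠ ⊥ := by
    intro h
    have : (1 : 𝓞 K) ∈ (⊥ : Ideal (𝓞 K)) := h ▸ Submodule.mem_top
    rw [Ideal.mem_bot] at this
    exact one_ne_zero this
  set etop : ι := ⟨⊤, htopbot⟩ with hetop
  have hnorm1 : ∀ I : ι, 1 ≤ (Ideal.absNorm I.1 : ℝ) := by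
    intro I
    have : 0 < Ideal.absNorm I.1 :=
      Nat.pos_of_ne_zero (fun h => I.2 (Ideal.absNorm_eq_zero_iff.mp h))
    exact_mod_cast this
  have hN2 : ∀ I : ι, I ≠ etop → (2:ℝ) ≤ (Ideal.absNorm I.1 : ℝ) := by
    intro I hI
    have h0 : Ideal.absNorm I.1 ≠ 0 := fun h => I.2 (Ideal.absNorm_eq_zero_iff.mp h)
    have h1' : Ideal.absNorm I.1 ≠ 1 := fun h => hI (Subtype.ext (Ideal.absNorm_eq_one_iff.mp h))
    have : 2 ≤ Ideal.absNorm I.1 := by omega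
    exact_mod_cast this
  have h2ne : (Ideal.span {(2 : 𝓞 K)} : Ideal (𝓞 K)) ≠ ⊥ := by
    simp only [ne_eq, Ideal.span_singleton_eq_bot]
    exact two_ne_zero
  set I2 : ι := ⟨Ideal.span {(2 : 𝓞 K)}, h2ne⟩ with hI2def
  have hI2 : I2 ≠ etop := by
    intro h
    have htop' : (Ideal.span {(2 : 𝓞 K)} : Ideal (𝓞 K)) = ⊤ := congrArg Subtype.val h
    have hone := Ideal.absNorm_eq_one_iff.mpr htop'
    rw [Ideal.absNorm_span_singleton] at hone
    have hcast : (2 : 𝓞 K) = algebraMap ℤ (𝓞 K) 2 := (map_ofNat (algebraMap ℤ (𝓞 K)) 2).symm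
    have b := Module.Free.chooseBasis ℤ (𝓞 K)
    rw [hcast, Algebra.norm_algebraMap_of_basis b] at hone
    have hcard : 0 < Fintype.card (Module.Free.ChooseBasisIndex ℤ (𝓞 K)) := Fintype.card_pos
    norm_num [Int.natAbs_pow] at hone
  -- elementary bounds on the real zeta values
  have hb1 : ∀ x : ℝ, 2 ≤ x → 1 ≤ (Z x).re := by
    intro x hx
    have h := le_hasSum (h1 x (by linarith)) etop
      (fun I _ => Real.rpow_nonneg (Nat.cast_nonneg _) _)
    simpa [hetop, Ideal.absNorm_top, Real.one_rpow] using h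
  have hb2 : ∀ x : ℝ, 2 ≤ x → (Z x).re ≤ (Z (2:ℝ)).re := by
    intro x hx
    refine hasSum_le (fun I => ?_) (h1 x (by linarith)) (h1 2 one_lt_two)
    exact Real.rpow_le_rpow_of_exponent_le (hnorm1 I) (by linarith)
  -- the tail over nontrivial ideals
  have hbot2 : ∀ x : ℝ, 1 < x →
      HasSum (fun I : ι => (Ideal.absNorm I.1 : ℝ) ^ (-x) - (if I = etop then (1:ℝ) else 0))
        ((Z x).re - 1) := by
    intro x hx
    exact (h1 x hx).sub (hasSum_ite_eq etop 1)
  have hf'nonneg : ∀ (x : ℝ), ∀ I : ι,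
      0 ≤ (Ideal.absNorm I.1 : ℝ) ^ (-x) - (if I = etop then (1:ℝ) else 0) := by
    intro x I
    by_cases hI : I = etop
    · subst hI
      simp [hetop, Ideal.absNorm_top, Real.one_rpow]
    · simp only [hI, if_neg, ite_false, sub_zero]
      exact Real.rpow_nonneg (Nat.cast_nonneg _) _
  have hup : ∀ x : ℝ, 2 ≤ x → (Z x).re - 1 ≤ (2:ℝ) ^ (2 - x) * ((Z (2:ℝ)).re - 1) := by
    intro x hx
    have hsx := hbot2 x (by linarith)
    have hs2 := (hbot2 2 one_lt_two).mul_left ((2:ℝ) ^ (2 - x))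
    refine hasSum_le (fun I => ?_) hsx hs2
    by_cases hI : I = etop
    · subst hI
      simp [hetop, Ideal.absNorm_top, Real.one_rpow]
    · simp only [hI, ite_false, sub_zero]
      have hN := hN2 I hI
      have hNpos : (0:ℝ) < (Ideal.absNorm I.1 : ℝ) := by linarith
      calc (Ideal.absNorm I.1 : ℝ) ^ (-x)
          = (Ideal.absNorm I.1 : ℝ) ^ (2 - x) * (Ideal.absNorm I.1 : ℝ) ^ (-(2:ℝ)) := by
            rw [← Real.rpow_add hNpos]; ring_nf
      _ ≤ (2:ℝ) ^ (2 - x) * (Ideal.absNorm I.1 : ℝ) ^ (-(2:ℝ)) := by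
            refine mul_le_mul_of_nonneg_right ?_ (Real.rpow_nonneg hNpos.le _)
            exact Real.rpow_le_rpow_of_nonpos two_pos hN (by linarith)
  have hlow : ∀ x : ℝ, 1 < x → 0 < (Z x).re - 1 := by
    intro x hx
    have hterm := le_hasSum (hbot2 x hx) I2 (fun J _ => hf'nonneg x J)
    have hpos : (0:ℝ) < (Ideal.absNorm I2.1 : ℝ) ^ (-x) :=
      Real.rpow_pos_of_pos (by linarith [hnorm1 I2]) _
    rw [if_neg hI2, sub_zero] at hterm
    linarith
  -- boundedness of the analytic part
  set C : ℝ := (Z (2:ℝ)).re + |ρ| with hCdef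
  have hC0 : 0 ≤ C := by
    have := hb1 2 le_rfl
    have := abs_nonneg ρ
    rw [hCdef]; linarith
  have hC : ∀ x : ℝ, 2 ≤ x → |(Z x).re - ρ / (x - 1)| ≤ C := by
    intro x hx
    have h1x := hb1 x hx
    have h2x := hb2 x hx
    have hd : |ρ / (x - 1)| ≤ |ρ| := by
      rw [abs_div, abs_of_pos (by linarith : (0:ℝ) < x - 1)]
      exact div_le_self (abs_nonneg _) (by linarith)
    calc |(Z x).re - ρ / (x - 1)| ≤ |(Z x).re| + |ρ / (x - 1)| := abs_sub _ _
    _ ≤ C := by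
        rw [abs_of_pos (by linarith : (0:ℝ) < (Z x).re), hCdef]
        linarith
  -- main contradiction: the coefficients cannot eventually vanish
  have key : ∀ N : ℕ, (∀ n, N < n → γ n = 0) → False := by
    intro N htop
    have hz1 : ∀ k, 1 ≤ k → γ k = 0 := lemC h2 hC0 hC htop
    have hg0 : ∀ x : ℝ, 2 ≤ x → (Z x).re = γ 0 + ρ / (x - 1) := by
      intro x hx
      have hfin : HasSum (fun n : ℕ => γ n * (x - 1) ^ n) (γ 0 * (x - 1) ^ 0) :=
        hasSum_single 0 (fun n hn => by rw [hz1 n (Nat.one_le_iff_ne_zero.mpr hn), zero_mul])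
      have h := (h2 x hx).unique hfin
      simp only [pow_zero, mul_one] at h
      linarith
    have hpow2 : ∀ n : ℕ, (2:ℝ) ^ (2 - (((n:ℝ) + 2))) = (1/2 : ℝ) ^ n := by
      intro n
      rw [show (2:ℝ) - ((n:ℝ) + 2) = -(n:ℝ) by ring, Real.rpow_neg (by norm_num),
        Real.rpow_natCast, one_div, inv_pow]
    have ltend : Tendsto (fun n : ℕ => (Z (((n:ℝ) + 2 : ℝ))).re) atTop (𝓝 (γ 0)) := by
      have he : ∀ n : ℕ, (Z (((n:ℝ) + 2 : ℝ))).re = γ 0 + ρ / ((n:ℝ) + 1) := by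
        intro n
        rw [hg0 ((n:ℝ) + 2) (by linarith [Nat.cast_nonneg (α := ℝ) n]),
          show ((n:ℝ) + 2) - 1 = (n:ℝ) + 1 by ring]
      simp only [he]
      have hn1 : Tendsto (fun n : ℕ => (n:ℝ) + 1) atTop atTop :=
        tendsto_atTop_add_const_right _ _ tendsto_natCast_atTop_atTop
      have : Tendsto (fun n : ℕ => ρ / ((n:ℝ) + 1)) atTop (𝓝 0) := by
        simp only [div_eq_mul_inv]
        simpa using (hn1.inv_tendsto_atTop).const_mul ρ
      simpa using tendsto_const_nhds.add this
    have ltend1 : Tendsto (fun n : ℕ => (Z (((n:ℝ) + 2 : ℝ))).re) atTop (𝓝 1) := by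
      have hupper : Tendsto (fun n : ℕ => 1 + (1/2 : ℝ) ^ n * ((Z (2:ℝ)).re - 1)) atTop (𝓝 1) := by
        have hg : Tendsto (fun n : ℕ => (1/2 : ℝ) ^ n) atTop (𝓝 0) :=
          tendsto_pow_atTop_nhds_zero_of_lt_one (by norm_num) (by norm_num)
        simpa using tendsto_const_nhds.add (hg.mul_const ((Z (2:ℝ)).re - 1))
      refine tendsto_of_tendsto_of_tendsto_of_le_of_le (g := fun _ : ℕ => (1:ℝ))
        (h := fun n : ℕ => 1 + (1/2 : ℝ) ^ n * ((Z (2:ℝ)).re - 1)) tendsto_const_nhds hupper ?_ ?_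
      · intro n
        exact hb1 _ (by linarith [Nat.cast_nonneg (α := ℝ) n])
      · intro n
        have := hup ((n:ℝ) + 2) (by linarith [Nat.cast_nonneg (α := ℝ) n])
        rw [hpow2 n] at this
        linarith
    have hγ0 : γ 0 = 1 := tendsto_nhds_unique ltend ltend1
    have hρpos : 0 < ρ := by
      have h := hg0 2 le_rfl
      have h2' := hlow 2 one_lt_two
      rw [hγ0, show (2:ℝ) - 1 = 1 by norm_num, div_one] at h
      linarith
    have hρnonpos : ρ ≤ 0 := by
      have hc2 : 0 ≤ (Z (2:ℝ)).re - 1 := (hlow 2 one_lt_two).le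
      have t1 := tendsto_self_mul_const_pow_of_lt_one (by norm_num : (0:ℝ) ≤ 1/2)
        (by norm_num : (1/2 : ℝ) < 1)
      have t2 : Tendsto (fun n : ℕ => (1/2 : ℝ) ^ n) atTop (𝓝 0) :=
        tendsto_pow_atTop_nhds_zero_of_lt_one (by norm_num) (by norm_num)
      have t3 : Tendsto (fun n : ℕ => ((n:ℝ) + 1) * (1/2 : ℝ) ^ n) atTop (𝓝 0) := by
        have := t1.add t2
        simpa [add_mul] using this
      have t4 : Tendsto (fun n : ℕ => ((n:ℝ) + 1) * (1/2 : ℝ) ^ n * ((Z (2:ℝ)).re - 1))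
          atTop (𝓝 0) := by simpa using t3.mul_const ((Z (2:ℝ)).re - 1)
      refine ge_of_tendsto t4 (Eventually.of_forall fun n => ?_)
      have hn0 : (0:ℝ) < (n:ℝ) + 1 := by positivity
      have hx2 : (2:ℝ) ≤ (n:ℝ) + 2 := by linarith [Nat.cast_nonneg (α := ℝ) n]
      have hgx := hg0 ((n:ℝ) + 2) hx2
      rw [hγ0, show ((n:ℝ) + 2) - 1 = (n:ℝ) + 1 by ring] at hgx
      have hux := hup ((n:ℝ) + 2) hx2
      rw [hpow2 n] at hux
      have hdiv : ρ / ((n:ℝ) + 1) ≤ (1/2 : ℝ) ^ n * ((Z (2:ℝ)).re - 1) := by linarith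
      calc ρ = ((n:ℝ) + 1) * (ρ / ((n:ℝ) + 1)) := by field_simp
      _ ≤ ((n:ℝ) + 1) * ((1/2 : ℝ) ^ n * ((Z (2:ℝ)).re - 1)) :=
          mul_le_mul_of_nonneg_left hdiv hn0.le
      _ = ((n:ℝ) + 1) * (1/2 : ℝ) ^ n * ((Z (2:ℝ)).re - 1) := by ring
    linarith
  constructor
  · by_contra hfin
    rw [Set.not_infinite] at hfin
    obtain ⟨N, hN⟩ := hfin.bddAbove
    have hsign : ∀ n, N + 1 ≤ n → 0 ≤ -γ n := by
      intro n hn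
      by_contra hneg
      push_neg at hneg
      have : n ∈ {n : ℕ | 0 < γ n} := by simp only [Set.mem_setOf_eq]; linarith
      exact absurd (hN this) (by omega)
    have hsum' : ∀ x : ℝ, 2 ≤ x →
        HasSum (fun n => (-γ n) * (x - 1) ^ n) (-((Z x).re - ρ / (x - 1))) := by
      intro x hx
      simpa [neg_mul] using (h2 x hx).neg
    have hC' : ∀ x : ℝ, 2 ≤ x → |(-((Z x).re - ρ / (x - 1)))| ≤ C := by
      intro x hx
      rw [abs_neg]; exact hC x hx
    have hzero := lemA hsum' hC0 hC' hsign
    exact key (N + 1) fun n hn => neg_eq_zero.mp (hzero n hn)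
  · by_contra hfin
    rw [Set.not_infinite] at hfin
    obtain ⟨N, hN⟩ := hfin.bddAbove
    have hsign : ∀ n, N + 1 ≤ n → 0 ≤ γ n := by
      intro n hn
      by_contra hneg
      push_neg at hneg
      have : n ∈ {n : ℕ | γ n < 0} := by simp only [Set.mem_setOf_eq]; linarith
      exact absurd (hN this) (by omega)
    have hzero := lemA h2 hC0 hC hsign
    exact key (N + 1) hzero
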